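/- Let f : ℝP¹ → ℝ be continuous. Then the homotopy significant spectrum of f equals { hs₁, hs₂ } = { min f, max f }. -/

import Mathlib

open Set Metric Topology unitInterval

noncomputable section
open Classical

variable {B : Type*} [NormedAddCommGroup B] [NormedSpace ℝ B]

/-- There exists a continuous, odd, nonvanishing map `A → ℝ^m \ {0}`. -/
def HasOddMap (A : Set B) (m : ℕ) : Prop :=
  ∃ h : A → (Fin m → ℝ), Continuous h ∧ (∀ x, h x ≠ 0) ∧
    ∀ (x : A) (hx : -(x : B) ∈ A), h ⟨-(x : B), hx⟩ = -h x

/-- Krasnoselskii genus. -/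
def genus (A : Set B) : ℕ∞ :=
  if A = ∅ then 0 else sInf {m : ℕ∞ | ∃ k : ℕ, m = k ∧ HasOddMap A k}

/-- A set is contractible within the ambient space `Φ`. -/
def ContractibleIn {Φ : Type*} [TopologicalSpace Φ] (C : Set Φ) : Prop :=
  ∃ x₀ : Φ, ∃ H : C(↥C × ↥I, Φ),
    (∀ x : C, H (x, 0) = (x : Φ)) ∧ (∀ x : C, H (x, 1) = x₀)

/-- Lusternik–Schnirelmann subspace category (with closed covers). -/
def catLS {Φ : Type*} [TopologicalSpace Φ] (A : Set Φ) : ℕ∞ :=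
  sInf {m : ℕ∞ | ∃ k : ℕ, m = k ∧ ∃ C : Fin k → Set Φ,
    (∀ i, IsClosed (C i)) ∧ (∀ i, ContractibleIn (C i)) ∧ A ⊆ ⋃ i, C i}

/-- `X` can be brought to `Y` via a homotopy in `Φ` starting from the inclusion. -/
def BringsTo {Φ : Type*} [TopologicalSpace Φ] (X Y : Set Φ) : Prop :=
  ∃ H : C(↥X × ↥I, Φ),
    (∀ x : X, H (x, 0) = (x : Φ)) ∧ (∀ x : X, H (x, 1) ∈ Y)

/-- `a` lies in the homotopy significant spectrum of `f`. -/
def HomotopySignificant {Φ : Type*} [TopologicalSpace Φ] (f : Φ → ℝ) (a : ℝ) : Prop :=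
  ¬ BringsTo {x | f x ≤ a} {x | f x < a}

/-- `e` is a weak homotopy significant eigenvalue of `f`. -/
def WeakHomotopySignificant {Φ : Type*} [TopologicalSpace Φ] (f : Φ → ℝ) (e : ℝ) : Prop :=
  ∀ t₁ > e, ∀ t₂ < e, ¬ BringsTo {x | f x ≤ t₁} {x | f x ≤ t₂}

/-- The k-th Krasnoselskii eigenvalue of (the restriction to the unit sphere of) `f`. -/
def kr (f : B → ℝ) (k : ℕ) : EReal :=
  ⨅ A ∈ {A : Set B | A ⊆ sphere (0 : B) 1 ∧ IsClosed A ∧ A = -A ∧ (k : ℕ∞) ≤ genus A},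
    ⨆ x ∈ A, (f x : EReal)

/-- The k-th category (min-max) eigenvalue of `f`. -/
def hs {Φ : Type*} [TopologicalSpace Φ] (f : Φ → ℝ) (k : ℕ) : EReal :=
  ⨅ A ∈ {A : Set Φ | IsClosed A ∧ (k : ℕ∞) ≤ catLS A}, ⨆ x ∈ A, (f x : EReal)

/-- The antipodal setoid on the unit sphere of `B`. -/
def projSetoid (B : Type*) [NormedAddCommGroup B] [NormedSpace ℝ B] :
    Setoid ↥(sphere (0 : B) 1) where
  r x y := (x : B) = y ∨ (x : B) = -(y : B)
  iseqv := by
    constructor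
    · intro x; exact Or.inl rfl
    · rintro x y (h | h)
      · exact Or.inl h.symm
      · exact Or.inr (by rw [h, neg_neg])
    · rintro x y z (h | h) (h' | h')
      · exact Or.inl (h.trans h')
      · exact Or.inr (by rw [h, h'])
      · exact Or.inr (by rw [h, h'])
      · exact Or.inl (by rw [h, h', neg_neg])

/-- The projective space of `B`, as the quotient of the unit sphere by the antipodal map. -/
def Proj (B : Type*) [NormedAddCommGroup B] [NormedSpace ℝ B] := Quotient (projSetoid B)

instance : TopologicalSpace (Proj B) := instTopologicalSpaceQuotient


namespace RP1

open Complex Real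

noncomputable section

abbrev E2 := EuclideanSpace ℝ (Fin 2)
abbrev Sph := Metric.sphere (0 : E2) 1
abbrev Phi := Proj E2

/-- build a vector -/
def vec (a b : ℝ) : E2 := !₂[a, b]

lemma vec_norm (a b : ℝ) : ‖vec a b‖ = Real.sqrt (a^2 + b^2) := by
  rw [EuclideanSpace.norm_eq]
  congr 1
  simp [vec, Fin.sum_univ_two, sq_abs]

lemma vec_mem_sphere (θ : ℝ) : vec (Real.cos θ) (Real.sin θ) ∈ Sph := by
  rw [mem_sphere_zero_iff_norm, vec_norm]
  rw [Real.cos_sq_add_sin_sq]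
  exact Real.sqrt_one

/-- complexification -/
def cm (v : E2) : ℂ := (v 0 : ℂ) + (v 1 : ℂ) * Complex.I

lemma cm_vec (a b : ℝ) : cm (vec a b) = (a : ℂ) + (b:ℂ) * Complex.I := by
  simp [cm, vec]

lemma cm_neg (v : E2) : cm (-v) = - cm v := by
  simp [cm]; ring

lemma cm_inj {v w : E2} (h : cm v = cm w) : v = w := by
  have h1 : (cm v).re = (cm w).re := by rw [h]
  have h2 : (cm v).im = (cm w).im := by rw [h]
  simp [cm] at h1 h2
  ext i
  fin_cases i <;> assumption

lemma continuous_cm : Continuous cm := by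
  apply Continuous.add
  · exact Complex.continuous_ofReal.comp ((continuous_apply 0).comp (PiLp.continuous_ofLp 2 _))
  · exact (Complex.continuous_ofReal.comp ((continuous_apply 1).comp (PiLp.continuous_ofLp 2 _))).mul continuous_const

lemma abs_cm (v : Sph) : ‖cm v‖ = 1 := by
  have hv : ‖(v : E2)‖ = 1 := mem_sphere_zero_iff_norm.mp v.2
  have : ‖cm v‖ ^ 2 = 1 := by
    rw [Complex.sq_norm, cm, Complex.normSq_add_mul_I]
    have h2 : Real.sqrt (∑ i : Fin 2, ‖(v:E2) i‖^2) = 1 := by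
      rw [← EuclideanSpace.norm_eq (v : E2), hv]
    have h3 : (∑ i : Fin 2, ‖(v:E2) i‖^2) = 1 := Real.sqrt_eq_one.mp h2
    simpa [Fin.sum_univ_two, _root_.sq_abs] using h3
  nlinarith [norm_nonneg (cm v), this]

/-- the squaring map on Phi -/
def sq : Phi → ℂ :=
  Quotient.lift (fun v : Sph => (cm v)^2) (by
    rintro v w (h | h)
    · rw [show (v:E2) = w from h]
    · rw [show (v:E2) = -(w:E2) from h, cm_neg]; ring)

lemma sq_mk (v : Sph) : sq (Quotient.mk _ v) = (cm v)^2 := rfl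

lemma continuous_sq : Continuous sq :=
  Continuous.quotient_lift ((continuous_cm.comp continuous_subtype_val).pow 2) _

lemma abs_sq (x : Phi) : ‖sq x‖ = 1 := by
  induction x using Quotient.ind with
  | _ v => rw [sq_mk]; simp [abs_cm v]

lemma sq_inj : Function.Injective sq := by
  intro x y
  induction x using Quotient.ind with
  | _ v =>
  induction y using Quotient.ind with
  | _ w =>
  intro h
  rw [sq_mk, sq_mk] at h
  have : (cm v - cm w) * (cm v + cm w) = 0 := by ring_nf; linear_combination h
  rcases mul_eq_zero.mp this with h' | h'
  · have : cm (v:E2) = cm (w:E2) := by linear_combination h'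
    exact Quotient.sound (Or.inl (cm_inj this))
  · have : cm (v:E2) = cm (-(w:E2)) := by rw [cm_neg]; linear_combination h'
    exact Quotient.sound (Or.inr (cm_inj this))

lemma sq_surj_circle (z : ℂ) (hz : ‖z‖ = 1) : ∃ x : Phi, sq x = z := by
  refine ⟨Quotient.mk _ ⟨vec (Real.cos (z.arg / 2)) (Real.sin (z.arg / 2)), vec_mem_sphere _⟩, ?_⟩
  rw [sq_mk]
  have : cm (vec (Real.cos (z.arg / 2)) (Real.sin (z.arg / 2))) = Complex.exp ((z.arg/2 : ℝ) * Complex.I) := by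
    rw [cm_vec, Complex.exp_mul_I]
    push_cast
    simp [Complex.ofReal_cos, Complex.ofReal_sin]
  rw [this, ← Complex.exp_nat_mul]
  have harg : ((2:ℕ) : ℂ) * ((z.arg/2 : ℝ) * Complex.I) = (z.arg : ℂ) * Complex.I := by
    push_cast; ring
  rw [harg]
  conv_rhs => rw [← Complex.norm_mul_exp_arg_mul_I z, hz]
  simp

end
end RP1
namespace RP1
noncomputable section
open Complex Real

instance : CompactSpace Phi := by unfold Phi Proj; infer_instance

instance : Nonempty Phi := ⟨Quotient.mk _ ⟨vec 1 0, by
  rw [mem_sphere_zero_iff_norm, vec_norm]; simp⟩⟩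

abbrev Sc := Metric.sphere (0 : ℂ) 1

lemma sq_mem_Sc (x : Phi) : sq x ∈ Sc := by
  rw [mem_sphere_zero_iff_norm, abs_sq]

def eEquiv : Phi ≃ ↥Sc :=
  Equiv.ofBijective (fun x => ⟨sq x, sq_mem_Sc x⟩)
    ⟨fun x y h => sq_inj (congrArg Subtype.val h),
     fun z => by
      obtain ⟨x, hx⟩ := sq_surj_circle z.1 (by
        have := mem_sphere_zero_iff_norm.mp z.2
        exact this)
      exact ⟨x, Subtype.ext hx⟩⟩

def eHomeo : Phi ≃ₜ ↥Sc :=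
  Continuous.homeoOfEquivCompactToT2 (f := eEquiv) (continuous_sq.subtype_mk _)

lemma eHomeo_apply (x : Phi) : (eHomeo x : ℂ) = sq x := rfl

/-- the continuous square-root section -/
def sig : ↥Sc → Phi := eHomeo.symm

lemma continuous_sig : Continuous sig := eHomeo.symm.continuous

lemma sq_sig (z : ↥Sc) : sq (sig z) = (z : ℂ) := by
  have := eHomeo.apply_symm_apply z
  exact congrArg Subtype.val this

lemma sig_sq (x : Phi) (h : sq x ∈ Sc) : sig ⟨sq x, h⟩ = x := by
  have : (⟨sq x, h⟩ : ↥Sc) = eHomeo x := Subtype.ext rfl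
  rw [this]
  exact eHomeo.symm_apply_apply x

instance : T2Space Phi := eHomeo.isEmbedding.t2Space

/-- the standard loop -/
def gam (s : ℝ) : Phi := Quotient.mk _ ⟨vec (Real.cos (π*s)) (Real.sin (π*s)), vec_mem_sphere _⟩

lemma continuous_vec2 : Continuous (fun p : ℝ × ℝ => vec p.1 p.2) := by
  apply (PiLp.continuous_toLp 2 (fun _ : Fin 2 => ℝ)).comp
  apply continuous_pi
  intro i
  fin_cases i
  · simpa [vec] using continuous_fst
  · simpa [vec] using continuous_snd

lemma continuous_gam : Continuous gam := by
  apply Continuous.comp continuous_quotient_mk'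
  apply Continuous.subtype_mk
  exact continuous_vec2.comp (((Real.continuous_cos.comp (continuous_const.mul continuous_id)).prodMk
    (Real.continuous_sin.comp (continuous_const.mul continuous_id))))

lemma cm_cos_sin (θ : ℝ) : cm (vec (Real.cos θ) (Real.sin θ)) = Complex.exp ((θ:ℝ) * Complex.I) := by
  rw [cm_vec, Complex.exp_mul_I]
  simp [Complex.ofReal_cos, Complex.ofReal_sin]

lemma sq_gam (s : ℝ) : sq (gam s) = Complex.exp ((2*π*s : ℝ) * Complex.I) := by
  rw [gam, sq_mk, cm_cos_sin, ← Complex.exp_nat_mul]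
  congr 1
  push_cast
  ring

lemma gam_loop : gam 0 = gam 1 := by
  apply Quotient.sound
  apply Or.inr
  show vec (Real.cos (π*0)) (Real.sin (π*0)) = -(vec (Real.cos (π*1)) (Real.sin (π*1)))
  ext i
  fin_cases i <;> simp [vec]

def pt1 : Phi := Quotient.mk _ ⟨vec 1 0, by rw [mem_sphere_zero_iff_norm, vec_norm]; simp⟩
def pt2 : Phi := Quotient.mk _ ⟨vec 0 1, by rw [mem_sphere_zero_iff_norm, vec_norm]; simp⟩

lemma pt1_ne_pt2 : pt1 ≠ pt2 := by
  intro h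
  have := congrArg sq h
  rw [pt1, pt2, sq_mk, sq_mk, cm_vec, cm_vec] at this
  simp at this
  have h1 : ((1:ℂ))^2 = (Complex.I)^2 := by simpa using this
  rw [Complex.I_sq] at h1
  norm_num at h1

lemma exists_ne_pt (x : Phi) : ∃ p : Phi, p ≠ x := by
  by_cases h : x = pt1
  · exact ⟨pt2, by rw [h]; exact fun hh => pt1_ne_pt2 hh.symm⟩
  · exact ⟨pt1, fun hh => h hh.symm⟩

end
end RP1
namespace RP1
noncomputable section
open Complex Real unitInterval

lemma mem_slitPlane_of_abs_one {z : ℂ} (hz : ‖z‖ = 1) (hne : z ≠ -1) :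
    z ∈ Complex.slitPlane := by
  rw [Complex.mem_slitPlane_iff]
  by_cases him : z.im = 0
  · left
    have hn : Complex.normSq z = 1 := by
      have := Complex.sq_norm z; rw [hz] at this; simpa using this.symm
    rw [Complex.normSq_apply, him] at hn
    simp at hn
    have hff : (z.re - 1) * (z.re + 1) = 0 := by nlinarith
    rcases mul_eq_zero.mp hff with h' | h'
    · linarith
    · exfalso
      apply hne
      apply Complex.ext
      · simpa using by linarith
      · simpa using him
  · exact Or.inr him

lemma exp_arg_of_abs_one {z : ℂ} (hz : ‖z‖ = 1) :
    Complex.exp ((z.arg : ℝ) * Complex.I) = z := by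
  have := Complex.norm_mul_exp_arg_mul_I z
  rwa [hz, Complex.ofReal_one, one_mul] at this

/-- winding of a loop -/
def Wind (u : ↥I → ℂ) (c : ℝ) : Prop :=
  ∃ w : ↥I → ℝ, Continuous w ∧ (∀ s, Complex.exp ((w s : ℝ) * Complex.I) = u s) ∧ w 1 - w 0 = c

lemma int_valued_eq (δ : ↥I → ℝ) (hc : Continuous δ) (hint : ∀ s, ∃ n : ℤ, δ s = 2*π*n) :
    δ 1 = δ 0 := by
  obtain ⟨n0, h0⟩ := hint 0
  obtain ⟨n1, h1⟩ := hint 1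
  by_cases hn : n0 = n1
  · rw [h0, h1, hn]
  · exfalso
    set δ' : ℝ → ℝ := δ ∘ Set.projIcc 0 1 zero_le_one with hδ'
    have hc' : Continuous δ' := hc.comp continuous_projIcc
    have hIV := intermediate_value_uIcc (a := (0:ℝ)) (b := 1) (f := δ') hc'.continuousOn
    have e0 : δ' 0 = 2*π*n0 := by
      rw [hδ']; simp only [Function.comp_apply, Set.projIcc_left]; exact h0
    have e1 : δ' 1 = 2*π*n1 := by
      rw [hδ']; simp only [Function.comp_apply, Set.projIcc_right]; exact h1
    set m := min n0 n1
    set M := max n0 n1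
    have hmM : m + 1 ≤ M := by
      rcases lt_or_gt_of_ne hn with h | h
      · simp [m, M, min_eq_left h.le, max_eq_right h.le]; omega
      · simp [m, M, min_eq_right h.le, max_eq_left h.le]; omega
    have hy : (2*π*m + π) ∈ Set.uIcc (δ' 0) (δ' 1) := by
      rw [e0, e1, Set.mem_uIcc]
      have hπ := Real.pi_pos
      rcases le_total n0 n1 with h | h
      · left
        have hm : m = n0 := min_eq_left h
        have h1n : (n0:ℝ) + 1 ≤ n1 := by exact_mod_cast (by omega : n0 + 1 ≤ n1)
        rw [hm]
        constructor
        · push_cast; nlinarith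
        · push_cast; nlinarith
      · right
        have hm : m = n1 := min_eq_right h
        have h1n : (n1:ℝ) + 1 ≤ n0 := by exact_mod_cast (by omega : n1 + 1 ≤ n0)
        rw [hm]
        constructor
        · push_cast; nlinarith
        · push_cast; nlinarith
    obtain ⟨t, _, ht⟩ := hIV hy
    obtain ⟨k, hk⟩ := hint (Set.projIcc 0 1 zero_le_one t)
    have : 2*π*m + π = 2*π*k := by rw [← hk]; exact ht.symm
    have hπ : π ≠ 0 := Real.pi_ne_zero
    have : (2*(m:ℝ) + 1) = 2*(k:ℝ) := by
      field_simp at this ⊢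
      nlinarith [Real.pi_pos]
    have : (2*m + 1 : ℤ) = 2*k := by exact_mod_cast this
    omega

lemma wind_unique {u : ↥I → ℂ} {c c' : ℝ} (h : Wind u c) (h' : Wind u c') : c = c' := by
  obtain ⟨w, hw, hwe, hwc⟩ := h
  obtain ⟨w', hw', hwe', hwc'⟩ := h'
  set δ : ↥I → ℝ := fun s => w s - w' s with hδ
  have hδc : Continuous δ := hw.sub hw'
  have hint : ∀ s, ∃ n : ℤ, δ s = 2*π*n := by
    intro s
    have : Complex.exp ((δ s : ℝ) * Complex.I) = 1 := by
      rw [hδ]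
      push_cast
      rw [sub_mul, Complex.exp_sub, hwe s, hwe' s, div_self]
      intro h0
      have := congrArg norm (hwe s)
      rw [h0] at this
      simp [Complex.norm_exp_ofReal_mul_I] at this
    obtain ⟨n, hn⟩ := Complex.exp_eq_one_iff.mp this
    refine ⟨n, ?_⟩
    have hI : ((δ s : ℝ) : ℂ) = (n:ℂ) * (2*(π:ℂ)) := by
      have := hn
      field_simp at this ⊢
      have hI2 : ((δ s : ℝ) : ℂ) * Complex.I = ((n:ℂ) * (2*(π:ℂ))) * Complex.I := by
        rw [this]; ring
      exact (mul_right_cancel₀ Complex.I_ne_zero hI2).trans (by ring)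
    have h2 : ((δ s : ℝ) : ℂ) = ((2*π*n : ℝ) : ℂ) := by rw [hI]; push_cast; ring
    exact_mod_cast h2
  have := int_valued_eq δ hδc hint
  have : w 1 - w' 1 = w 0 - w' 0 := this
  linarith

lemma wind_step {u v : ↥I → ℂ} {c : ℝ}
    (hu1 : ∀ s, ‖u s‖ = 1) (hv1 : ∀ s, ‖v s‖ = 1)
    (hne : ∀ s, v s ≠ -u s) (hcu : Continuous u) (hcv : Continuous v)
    (hlu : u 0 = u 1) (hlv : v 0 = v 1) (h : Wind u c) : Wind v c := by
  obtain ⟨w, hw, hwe, hwc⟩ := h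
  have hu0 : ∀ s, u s ≠ 0 := by
    intro s h0
    have := hu1 s
    rw [h0] at this
    simp at this
  set r : ↥I → ℂ := fun s => v s / u s with hr
  have hr1 : ∀ s, ‖r s‖ = 1 := fun s => by
    rw [hr]; simp [norm_div, hu1 s, hv1 s]
  have hrne : ∀ s, r s ≠ -1 := by
    intro s heq
    apply hne s
    have : v s = r s * u s := by
      rw [hr]
      field_simp
      rw [mul_div_assoc, div_self (hu0 s), mul_one]
    rw [this, heq]; ring
  have hrslit : ∀ s, r s ∈ Complex.slitPlane := fun s =>
    mem_slitPlane_of_abs_one (hr1 s) (hrne s)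
  have hrc : Continuous r := hcv.div hcu hu0
  refine ⟨fun s => w s + (r s).arg, ?_, ?_, ?_⟩
  · apply hw.add
    rw [continuous_iff_continuousAt]
    intro s
    exact (Complex.continuousAt_arg (hrslit s)).comp hrc.continuousAt
  · intro s
    push_cast
    rw [add_mul, Complex.exp_add, hwe s, exp_arg_of_abs_one (hr1 s), hr]
    field_simp
    rw [mul_comm, mul_div_assoc, div_self (hu0 s), mul_one]
  · simp only [hr]
    rw [hlu, hlv]
    ring_nf
    linarith [hwc]

lemma wind_of_misses {u : ↥I → ℂ} {z₀ : ℂ}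
    (hu1 : ∀ s, ‖u s‖ = 1) (hz : ‖z₀‖ = 1)
    (hne : ∀ s, u s ≠ z₀) (hcu : Continuous u) (hlu : u 0 = u 1) : Wind u 0 := by
  have hz0 : z₀ ≠ 0 := fun h => by rw [h] at hz; simp at hz
  set r : ↥I → ℂ := fun s => -u s / z₀ with hr
  have hr1 : ∀ s, ‖r s‖ = 1 := fun s => by
    rw [hr]; simp [norm_div, hu1 s, hz]
  have hrne : ∀ s, r s ≠ -1 := by
    intro s heq
    apply hne s
    have : u s = -(r s * z₀) := by rw [hr]; field_simp
    rw [this, heq]; ring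
  refine ⟨fun s => (r s).arg + (-z₀).arg, ?_, ?_, ?_⟩
  · refine Continuous.add ?_ continuous_const
    rw [continuous_iff_continuousAt]
    intro s
    exact (Complex.continuousAt_arg (mem_slitPlane_of_abs_one (hr1 s) (hrne s))).comp
      ((hcu.neg.div_const z₀).continuousAt)
  · intro s
    push_cast
    rw [add_mul, Complex.exp_add, exp_arg_of_abs_one (hr1 s),
      exp_arg_of_abs_one (by simpa using hz)]
    rw [hr]
    field_simp
  · simp only [hr]
    rw [hlu]
    ring

end
end RP1
namespace RP1
noncomputable section
open Complex Real unitInterval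

lemma key_lemma (X : Set Phi) (hX : ∀ y, y ∈ X) (H : C(↥X × ↥I, Phi))
    (h0 : ∀ x : ↥X, H (x, 0) = (x : Phi)) (p : Phi) (h1 : ∀ x : ↥X, H (x, 1) ≠ p) :
    False := by
  set gamI : ↥I → ↥X := fun s => ⟨gam s, hX _⟩ with hgamI
  have hgamIc : Continuous gamI :=
    Continuous.subtype_mk (continuous_gam.comp continuous_subtype_val) _
  have hgamI01 : gamI 0 = gamI 1 := by
    apply Subtype.ext
    show gam ((0:↥I) : ℝ) = gam ((1:↥I) : ℝ)
    rw [Set.Icc.coe_zero, Set.Icc.coe_one]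
    exact gam_loop
  set G : ↥I × ↥I → ℂ := fun q => sq (H (gamI q.1, q.2)) with hG
  have hGc : Continuous G := by
    apply continuous_sq.comp
    exact H.continuous.comp ((hgamIc.comp continuous_fst).prodMk continuous_snd)
  have hUC := CompactSpace.uniformContinuous_of_continuous hGc
  obtain ⟨δ, hδ, hδ2⟩ := Metric.uniformContinuous_iff.mp hUC 2 (by norm_num)
  obtain ⟨n, hn⟩ := exists_nat_one_div_lt hδ
  have hn1 : (1:ℝ)/(n+1) < δ := hn
  set N : ℕ := n + 1 with hN
  have hNpos : 0 < (N:ℝ) := by positivity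
  have memIk : ∀ k : ℕ, k ≤ N → ((k:ℝ)/N ∈ I) := by
    intro k hk
    constructor
    · positivity
    · rw [div_le_one hNpos]; exact_mod_cast hk
  -- basic facts about rows
  have habs : ∀ q, ‖G q‖ = 1 := fun q => abs_sq _
  have hloop : ∀ t : ↥I, G (0, t) = G (1, t) := by
    intro t; rw [hG]; simp only; rw [hgamI01]
  have hrowc : ∀ t : ↥I, Continuous (fun s => G (s, t)) :=
    fun t => hGc.comp (continuous_id.prodMk continuous_const)
  -- induction over rows
  have claim : ∀ k : ℕ, ∀ hk : k ≤ N, Wind (fun s => G (s, ⟨(k:ℝ)/N, memIk k hk⟩)) (2*π) := by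
    intro k
    induction k with
    | zero =>
      intro hk
      have ht0 : (⟨((0:ℕ):ℝ)/N, memIk 0 hk⟩ : ↥I) = 0 := by
        apply Subtype.ext; show ((0:ℕ):ℝ)/N = 0; simp
      rw [ht0]
      refine ⟨fun s => 2*π*(s:ℝ), continuous_const.mul continuous_subtype_val, ?_, by norm_num⟩
      intro s
      rw [hG]
      simp only
      rw [h0 (gamI s)]
      show Complex.exp _ = sq (gam (s:ℝ))
      rw [sq_gam]
    | succ k ih =>
      intro hk
      have hkN : k ≤ N := by omega
      apply wind_step (u := fun s => G (s, ⟨(k:ℝ)/N, memIk k hkN⟩))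
      · intro s; exact habs _
      · intro s; exact habs _
      · intro s hsne
        have hn1' : (1:ℝ)/(N:ℝ) < δ := by rw [hN]; push_cast; exact hn1
        have hd : dist ((s, (⟨((k+1:ℕ):ℝ)/N, memIk _ hk⟩ : ↥I)))
            ((s, (⟨(k:ℝ)/N, memIk k hkN⟩ : ↥I))) < δ := by
          rw [Prod.dist_eq]
          apply max_lt
          · simpa using hδ
          · rw [Subtype.dist_eq]
            have heq : dist (((k+1:ℕ):ℝ)/N) ((k:ℝ)/N) = 1/N := by
              rw [Real.dist_eq, div_sub_div_same]
              have h1 : ((k+1:ℕ):ℝ) - k = 1 := by push_cast; ring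
              rw [h1, abs_div, abs_one, _root_.abs_of_pos hNpos]
            rw [heq]
            exact hn1'
        have := hδ2 hd
        rw [Complex.dist_eq, hsne] at this
        have : ‖-(2:ℂ) * G (s, ⟨(k:ℝ)/N, memIk k hkN⟩)‖ < 2 := by
          convert this using 2; ring
        rw [norm_mul, habs] at this
        simp at this
      · exact hrowc _
      · exact hrowc _
      · exact hloop _
      · exact hloop _
      · exact ih hkN
  -- top row misses p
  have htopI : (⟨((N:ℕ):ℝ)/N, memIk N le_rfl⟩ : ↥I) = 1 := by
    apply Subtype.ext; show ((N:ℕ):ℝ)/N = 1; field_simp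
  have htop : Wind (fun s => G (s, 1)) 0 := by
    apply wind_of_misses (z₀ := sq p)
    · intro s; exact habs _
    · exact abs_sq p
    · intro s hsp
      exact h1 (gamI s) (sq_inj hsp)
    · exact hrowc _
    · exact hloop 1
  have h2π := claim N le_rfl
  rw [htopI] at h2π
  have := wind_unique h2π htop
  have : π = 0 := by linarith
  exact Real.pi_ne_zero this
end
end RP1
namespace RP1
noncomputable section
open Complex Real unitInterval

lemma continuous_arg_comp {α : Type*} [TopologicalSpace α] {g : α → ℂ} (hg : Continuous g)
    (h1 : ∀ a, ‖g a‖ = 1) (hne : ∀ a, g a ≠ -1) :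
    Continuous (fun a => (g a).arg) := by
  rw [continuous_iff_continuousAt]
  intro a
  exact (Complex.continuousAt_arg (mem_slitPlane_of_abs_one (h1 a) (hne a))).comp hg.continuousAt

lemma abs_sq_div_ne_neg_one {x p : Phi} (hxp : x ≠ p) :
    ‖-sq x / sq p‖ = 1 ∧ -sq x / sq p ≠ -1 := by
  have hp : sq p ≠ 0 := fun h => by have := abs_sq p; rw [h] at this; simp at this
  constructor
  · rw [norm_div, norm_neg, abs_sq, abs_sq]; norm_num
  · intro h
    apply hxp
    apply sq_inj
    field_simp at h
    exact neg_inj.mp h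

/-- membership of `-w * exp(θ i)` in the circle -/
lemma neg_mul_exp_mem (w : ℂ) (hw : ‖w‖ = 1) (θ : ℝ) :
    -w * Complex.exp ((θ:ℝ) * Complex.I) ∈ Sc := by
  rw [mem_sphere_zero_iff_norm, norm_mul, norm_neg, hw,
    Complex.norm_exp_ofReal_mul_I, one_mul]

lemma exp_mem (θ : ℝ) : Complex.exp ((θ:ℝ) * Complex.I) ∈ Sc := by
  rw [mem_sphere_zero_iff_norm, Complex.norm_exp_ofReal_mul_I]

lemma sig_eq_of (z : ↥Sc) (x : Phi) (h : (z:ℂ) = sq x) : sig z = x := by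
  have hz : z = eHomeo x := Subtype.ext h
  rw [hz]
  exact eHomeo.symm_apply_apply x

lemma sig_congr {z z' : ↥Sc} (h : (z:ℂ) = (z':ℂ)) : sig z = sig z' :=
  congrArg sig (Subtype.ext h)

/-- Any subset of `Phi` missing a point is contractible in `Phi`;
moreover we can realize it as a `Homotopy` to the constant map at `sig ⟨-sq p, _⟩`. -/
def contrHomotopy (X : Set Phi) (p : Phi) (hXp : ∀ x : ↥X, (x:Phi) ≠ p) :
    ContinuousMap.Homotopy (⟨Subtype.val, continuous_subtype_val⟩ : C(↥X, Phi))
      (ContinuousMap.const _ (sig ⟨-sq p, by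
        rw [mem_sphere_zero_iff_norm, norm_neg, abs_sq]⟩)) := by
  set w : ℂ := sq p with hw
  have hw1 : ‖w‖ = 1 := abs_sq p
  set θfun : ↥X → ℝ := fun x => (-sq (x:Phi) / w).arg with hθ
  have hθc : Continuous θfun := by
    apply continuous_arg_comp
    · exact ((continuous_sq.comp continuous_subtype_val).neg).div_const w
    · intro x; exact (abs_sq_div_ne_neg_one (hXp x)).1
    · intro x; exact (abs_sq_div_ne_neg_one (hXp x)).2
  have hwne : w ≠ 0 := fun h => by rw [h] at hw1; simp at hw1
  refine ⟨⟨fun q => sig ⟨-w * Complex.exp ((((1 - (q.1:ℝ)) * θfun q.2 : ℝ)) * Complex.I),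
      neg_mul_exp_mem w hw1 _⟩, ?_⟩, ?_, ?_⟩
  · apply continuous_sig.comp
    apply Continuous.subtype_mk
    apply Continuous.mul continuous_const
    apply Complex.continuous_exp.comp
    apply Continuous.mul _ continuous_const
    apply Complex.continuous_ofReal.comp
    exact (continuous_const.sub (continuous_subtype_val.comp continuous_fst)).mul
      (hθc.comp continuous_snd)
  · intro x
    apply sig_eq_of
    have h0 : ((1 - ((0:↥I):ℝ)) * θfun x : ℝ) = θfun x := by norm_num
    show -w * Complex.exp (((1 - ((0:↥I):ℝ)) * θfun x : ℝ) * Complex.I) = sq (x:Phi)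
    rw [h0, hθ]
    rw [exp_arg_of_abs_one (abs_sq_div_ne_neg_one (hXp x)).1]
    field_simp
    rw [hw] at hwne ⊢; exact mul_div_cancel_left₀ _ hwne
  · intro x
    apply sig_congr
    show -w * Complex.exp (((1 - ((1:↥I):ℝ)) * θfun x : ℝ) * Complex.I) = -w
    have h0 : ((1 - ((1:↥I):ℝ)) * θfun x : ℝ) = 0 := by norm_num
    rw [h0]
    simp

end
end RP1
namespace RP1
noncomputable section
open Complex Real unitInterval

lemma contractibleIn_of_misses (X : Set Phi) (p : Phi) (hXp : ∀ x : ↥X, (x:Phi) ≠ p) :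
    ContractibleIn X := by
  set T := contrHomotopy X p hXp with hT
  refine ⟨sig ⟨-sq p, by
      rw [mem_sphere_zero_iff_norm, norm_neg, abs_sq]⟩,
    ⟨fun q => T (q.2, q.1), T.continuous.comp (continuous_snd.prodMk continuous_fst)⟩,
    fun x => ?_, fun x => ?_⟩
  · exact T.apply_zero x
  · exact T.apply_one x

/-- path homotopy between two constant maps -/
def pathHomotopy (X : Set Phi) (q₀ y₀ : Phi) (hq : sq q₀ = - sq y₀ ∨ True) :
    ContinuousMap.Homotopy (ContinuousMap.const (↥X) q₀) (ContinuousMap.const (↥X) y₀) := by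
  clear hq
  refine ⟨⟨fun q => sig ⟨Complex.exp ((((1 - (q.1:ℝ)) * (sq q₀).arg + (q.1:ℝ) * (sq y₀).arg : ℝ)) * Complex.I),
      exp_mem _⟩, ?_⟩, ?_, ?_⟩
  · apply continuous_sig.comp
    apply Continuous.subtype_mk
    apply Complex.continuous_exp.comp
    apply Continuous.mul _ continuous_const
    apply Complex.continuous_ofReal.comp
    apply Continuous.add
    · exact ((continuous_const.sub (continuous_subtype_val.comp continuous_fst)).mul continuous_const)
    · exact ((continuous_subtype_val.comp continuous_fst).mul continuous_const)
  · intro x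
    apply sig_eq_of
    show Complex.exp _ = sq q₀
    have h0 : ((1 - ((0:↥I):ℝ)) * (sq q₀).arg + ((0:↥I):ℝ) * (sq y₀).arg : ℝ) = (sq q₀).arg := by
      norm_num
    rw [h0, exp_arg_of_abs_one (abs_sq q₀)]
  · intro x
    apply sig_eq_of
    show Complex.exp _ = sq y₀
    have h0 : ((1 - ((1:↥I):ℝ)) * (sq q₀).arg + ((1:↥I):ℝ) * (sq y₀).arg : ℝ) = (sq y₀).arg := by
      norm_num
    rw [h0, exp_arg_of_abs_one (abs_sq y₀)]

lemma bringsTo_of_misses (X Y : Set Phi) (p y₀ : Phi) (hXp : ∀ x : ↥X, (x:Phi) ≠ p)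
    (hy : y₀ ∈ Y) : BringsTo X Y := by
  set T := (contrHomotopy X p hXp).trans (pathHomotopy X _ y₀ (Or.inr trivial)) with hT
  refine ⟨⟨fun q => T (q.2, q.1), T.continuous.comp (continuous_snd.prodMk continuous_fst)⟩,
    fun x => ?_, fun x => ?_⟩
  · exact T.apply_zero x
  · show T (1, x) ∈ Y
    rw [T.apply_one x]
    exact hy

lemma catLS_le_one_of_misses (A : Set Phi) (hA : IsClosed A) (p : Phi)
    (hp : ∀ x ∈ A, x ≠ p) : catLS A ≤ 1 := by
  apply sInf_le
  refine ⟨1, rfl, fun _ => A, fun _ => hA, fun _ => contractibleIn_of_misses A p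
    (fun x => hp x x.2), ?_⟩
  intro x hx
  exact Set.mem_iUnion.2 ⟨0, hx⟩

lemma catLS_empty : catLS (∅ : Set Phi) ≤ 0 := by
  apply sInf_le
  exact ⟨0, rfl, Fin.elim0, fun i => i.elim0, fun i => i.elim0, by simp⟩

lemma nonempty_of_one_le_catLS {A : Set Phi} (h : 1 ≤ catLS A) : A.Nonempty := by
  rcases A.eq_empty_or_nonempty with rfl | hne
  · exact absurd (h.trans catLS_empty) (by norm_num)
  · exact hne

lemma one_le_catLS_of_nonempty {A : Set Phi} (h : A.Nonempty) : 1 ≤ catLS A := by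
  apply le_sInf
  rintro m ⟨k, rfl, C, _, _, hsub⟩
  cases k with
  | zero =>
    obtain ⟨x, hx⟩ := h
    have := hsub hx
    rw [Set.mem_iUnion] at this
    obtain ⟨i, _⟩ := this
    exact i.elim0
  | succ k => exact_mod_cast Nat.succ_le_succ (Nat.zero_le k)

lemma two_le_catLS_univ : 2 ≤ catLS (Set.univ : Set Phi) := by
  apply le_sInf
  rintro m ⟨k, rfl, C, hCc, hCcontr, hsub⟩
  match k with
  | 0 =>
    have := hsub (Set.mem_univ pt1)
    rw [Set.mem_iUnion] at this
    obtain ⟨i, _⟩ := this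
    exact i.elim0
  | 1 =>
    exfalso
    have hX : ∀ y : Phi, y ∈ C 0 := by
      intro y
      have := hsub (Set.mem_univ y)
      rw [Set.mem_iUnion] at this
      obtain ⟨i, hi⟩ := this
      have : i = 0 := Subsingleton.elim _ _
      rwa [this] at hi
    obtain ⟨x₀, H, h0, h1⟩ := hCcontr 0
    obtain ⟨p, hp⟩ := exists_ne_pt x₀
    exact key_lemma (C 0) hX H h0 p (fun x => by rw [h1 x]; exact hp.symm)
  | (k+2) => exact_mod_cast Nat.le_add_left 2 k

end
end RP1

namespace RP1
noncomputable section
open Complex Real unitInterval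

lemma hs_one_eq {f : Phi → ℝ} (xm : Phi) (hxm : ∀ y, f xm ≤ f y) :
    hs f 1 = (f xm : EReal) := by
  apply le_antisymm
  · have hmem : ({xm} : Set Phi) ∈ {A : Set Phi | IsClosed A ∧ (1:ℕ∞) ≤ catLS A} :=
      ⟨isClosed_singleton, one_le_catLS_of_nonempty ⟨xm, rfl⟩⟩
    calc hs f 1 ≤ ⨆ x ∈ ({xm} : Set Phi), (f x : EReal) := iInf₂_le _ hmem
    _ = (f xm : EReal) := iSup_singleton
  · apply le_iInf₂
    intro A hA
    obtain ⟨x0, hx0⟩ := nonempty_of_one_le_catLS hA.2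
    calc (f xm : EReal) ≤ (f x0 : EReal) := by exact_mod_cast hxm x0
    _ ≤ ⨆ x ∈ A, (f x : EReal) := le_biSup (fun x => ((f x : EReal))) hx0

lemma hs_two_eq {f : Phi → ℝ} (xM : Phi) (hxM : ∀ y, f y ≤ f xM) :
    hs f 2 = (f xM : EReal) := by
  apply le_antisymm
  · calc hs f 2 ≤ ⨆ x ∈ (Set.univ : Set Phi), (f x : EReal) :=
        iInf₂_le _ ⟨isClosed_univ, two_le_catLS_univ⟩
    _ ≤ (f xM : EReal) := by
        apply iSup₂_le; intro x _; exact_mod_cast hxM x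
  · apply le_iInf₂
    intro A hA
    have hAuniv : A = Set.univ := by
      by_contra hne
      obtain ⟨p, hp⟩ := (Set.ne_univ_iff_exists_notMem A).mp hne
      have hle := catLS_le_one_of_misses A hA.1 p (fun x hx hxp => hp (hxp ▸ hx))
      have h2 := hA.2.trans hle
      norm_num at h2
    rw [hAuniv]
    calc (f xM : EReal) ≤ ⨆ x, (f x : EReal) := le_iSup (fun x => ((f x : EReal))) xM
    _ = ⨆ x ∈ (Set.univ : Set Phi), (f x : EReal) := by rw [iSup_univ]

end
end RP1

/-- For a continuous function on `ℝP¹`, the homotopy significant spectrum is exactly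
`{hs₁, hs₂} = {min f, max f}`. -/
theorem homotopySignificant_spectrum_rp1
    (f : Proj (EuclideanSpace ℝ (Fin 2)) → ℝ) (hf : Continuous f) :
    {a : ℝ | HomotopySignificant f a} =
      {a : ℝ | (a : EReal) = hs f 1 ∨ (a : EReal) = hs f 2} ∧
    hs f 1 = ⨅ x, (f x : EReal) ∧ hs f 2 = ⨆ x, (f x : EReal) := by
  obtain ⟨xm, -, hxm'⟩ := isCompact_univ.exists_isMinOn ⟨RP1.pt1, trivial⟩ hf.continuousOn
  obtain ⟨xM, -, hxM'⟩ := isCompact_univ.exists_isMaxOn ⟨RP1.pt1, trivial⟩ hf.continuousOn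
  have hxm : ∀ y, f xm ≤ f y := fun y => hxm' (Set.mem_univ y)
  have hxM : ∀ y, f y ≤ f xM := fun y => hxM' (Set.mem_univ y)
  have h1 : hs f 1 = (f xm : EReal) := RP1.hs_one_eq xm hxm
  have h2 : hs f 2 = (f xM : EReal) := RP1.hs_two_eq xM hxM
  have hinf : (⨅ x, (f x : EReal)) = (f xm : EReal) :=
    le_antisymm (iInf_le _ xm) (le_iInf fun y => by exact_mod_cast hxm y)
  have hsup : (⨆ x, (f x : EReal)) = (f xM : EReal) :=
    le_antisymm (iSup_le fun y => by exact_mod_cast hxM y) (le_iSup (fun x => ((f x : EReal))) xM)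
  refine ⟨?_, h1.trans hinf.symm, h2.trans hsup.symm⟩
  ext a
  simp only [Set.mem_setOf_eq, h1, h2, EReal.coe_eq_coe_iff]
  constructor
  · -- significant → a = min or a = max
    intro hsig
    by_contra hcon
    push_neg at hcon
    obtain ⟨hne1, hne2⟩ := hcon
    apply hsig
    rcases lt_trichotomy a (f xm) with h | h | h
    · -- below the minimum: sublevel set empty
      exact ⟨ContinuousMap.const _ RP1.pt1,
        fun x => absurd x.2 (not_le.mpr (lt_of_lt_of_le h (hxm _))),
        fun x => absurd x.2 (not_le.mpr (lt_of_lt_of_le h (hxm _)))⟩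
    · exact absurd h hne1
    · rcases lt_trichotomy a (f xM) with h' | h' | h'
      · -- strictly between
        apply RP1.bringsTo_of_misses _ _ xM xm
        · intro x heq
          have := x.2
          rw [heq] at this
          exact absurd this (not_le.mpr h')
        · exact h
      · exact absurd h' hne2
      · -- above the maximum
        exact ⟨⟨fun q => (q.1 : RP1.Phi), continuous_subtype_val.comp continuous_fst⟩,
          fun x => rfl, fun x => show f _ < a from lt_of_le_of_lt (hxM _) h'⟩
  · -- min and max are significant
    rintro (rfl | rfl)
    · rintro ⟨H, h0, h1⟩
      have := h1 ⟨xm, show f xm ≤ f xm from le_rfl⟩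
      exact absurd this (not_lt.mpr (hxm _))
    · rintro ⟨H, h0, h1⟩
      apply RP1.key_lemma {x | f x ≤ f xM} (fun y => hxM y) H h0 xM
      intro x heq
      have hlt := h1 x
      rw [heq] at hlt
      exact absurd (show f xM < f xM from hlt) (lt_irrefl _)

end
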